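/- Let A be a finite nonempty set of positive integers, let τ be a nonempty consecutive pattern (a word over a partially ordered alphabet), and let s ≥ 0. Then in ℚ⟦x,y⟧ the generating function for compositions with exactly s non-overlapping occurrences of τ satisfies: Σ_{n,m≥0} |{ σ ∈ C_{n;m}^A : τ-nlap(σ) = s }| x^n y^m = C_τ^A(x,y) · [ ( y·Σ_{a∈A} x^a − 1 )·C_τ^A(x,y) + 1 ]^s. -/

import Mathlib

/-- A composition of `n` with `m` parts, all parts in `A`. -/
def IsCompOf (A : Finset ℕ) (n m : ℕ) (σ : List ℕ) : Prop :=
  (∀ x ∈ σ, x ∈ A) ∧ σ.sum = n ∧ σ.length = m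

/-- An occurrence, starting at position `i`, of the consecutive pattern
`p : Fin ℓ → α` (a word over a partially ordered alphabet `α`) in `σ`. -/
def OccAt {α : Type*} [PartialOrder α] {ℓ : ℕ} (p : Fin ℓ → α)
    (σ : List ℕ) (i : ℕ) : Prop :=
  i + ℓ ≤ σ.length ∧ ∀ s t : Fin ℓ,
    (p s < p t → σ.getD (i + s) 0 < σ.getD (i + t) 0) ∧
    (p s = p t → σ.getD (i + s) 0 = σ.getD (i + t) 0)

/-- `σ` avoids the consecutive pattern `p`. -/
def AvoidsPat {α : Type*} [PartialOrder α] {ℓ : ℕ} (p : Fin ℓ → α)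
    (σ : List ℕ) : Prop :=
  ∀ i : ℕ, ¬ OccAt p σ i

/-- `τ-nlap σ`: the maximum number of pairwise non-overlapping occurrences of the
consecutive pattern `p` in `σ` (occurrences overlap iff they share a position). -/
noncomputable def nlap {α : Type*} [PartialOrder α] {ℓ : ℕ} (p : Fin ℓ → α)
    (σ : List ℕ) : ℕ :=
  sSup {k : ℕ | ∃ S : Finset ℕ, S.card = k ∧ (∀ i ∈ S, OccAt p σ i) ∧
    ∀ i ∈ S, ∀ j ∈ S, i ≠ j → i + ℓ ≤ j ∨ j + ℓ ≤ i}

namespace Stmt16Aux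

variable {α : Type*} [PartialOrder α] {ℓ : ℕ} {p : Fin ℓ → α}

lemma getD_take_of_lt (σ : List ℕ) {j k : ℕ} (h : j < k) :
    (σ.take k).getD j 0 = σ.getD j 0 := by
  simp [List.getD_eq_getElem?_getD, List.getElem?_take, h]

lemma getD_drop' (σ : List ℕ) (k j : ℕ) :
    (σ.drop k).getD j 0 = σ.getD (k + j) 0 := by
  simp [List.getD_eq_getElem?_getD, List.getElem?_drop]

lemma occAt_take_iff {σ : List ℕ} {k i : ℕ} :
    OccAt p (σ.take k) i ↔ i + ℓ ≤ k ∧ OccAt p σ i := by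
  constructor
  · rintro ⟨hlen, hcmp⟩
    rw [List.length_take] at hlen
    have hk : i + ℓ ≤ k := le_trans hlen (min_le_left _ _)
    refine ⟨hk, le_trans hlen (min_le_right _ _), fun s t => ?_⟩
    have := hcmp s t
    rwa [getD_take_of_lt σ (by have := s.isLt; omega),
      getD_take_of_lt σ (by have := t.isLt; omega)] at this
  · rintro ⟨hk, hlen, hcmp⟩
    refine ⟨by rw [List.length_take]; omega, fun s t => ?_⟩
    have := hcmp s t
    rwa [← getD_take_of_lt σ (k := k) (by have := s.isLt; omega),
      ← getD_take_of_lt σ (k := k) (by have := t.isLt; omega)] at this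

lemma occAt_drop_iff (hℓ : 0 < ℓ) {σ : List ℕ} {k i : ℕ} :
    OccAt p (σ.drop k) i ↔ OccAt p σ (k + i) := by
  constructor
  · rintro ⟨hlen, hcmp⟩
    rw [List.length_drop] at hlen
    refine ⟨by omega, fun s t => ?_⟩
    have := hcmp s t
    rwa [getD_drop', getD_drop', ← add_assoc, ← add_assoc] at this
  · rintro ⟨hlen, hcmp⟩
    refine ⟨by rw [List.length_drop]; omega, fun s t => ?_⟩
    rw [getD_drop', getD_drop', ← add_assoc, ← add_assoc]
    exact hcmp s t

lemma avoids_nil (hℓ : 0 < ℓ) : AvoidsPat p ([] : List ℕ) := by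
  intro i h
  rcases h with ⟨hlen, -⟩
  simp only [List.length_nil] at hlen
  omega

lemma avoids_dropLast {σ : List ℕ} (h : AvoidsPat p σ) : AvoidsPat p σ.dropLast := by
  intro i hi
  rw [List.dropLast_eq_take, occAt_take_iff] at hi
  exact h i hi.2

/-- The defining set of `nlap`. -/
def nlapSet (p : Fin ℓ → α) (σ : List ℕ) : Set ℕ :=
  {k : ℕ | ∃ S : Finset ℕ, S.card = k ∧ (∀ i ∈ S, OccAt p σ i) ∧
    ∀ i ∈ S, ∀ j ∈ S, i ≠ j → i + ℓ ≤ j ∨ j + ℓ ≤ i}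

lemma nlap_eq_sSup (σ : List ℕ) : nlap p σ = sSup (nlapSet p σ) := rfl

lemma zero_mem_nlapSet (σ : List ℕ) : 0 ∈ nlapSet p σ :=
  ⟨∅, by simp⟩

lemma nlapSet_bddAbove (hℓ : 0 < ℓ) (σ : List ℕ) : BddAbove (nlapSet p σ) := by
  refine ⟨σ.length, fun k hk => ?_⟩
  obtain ⟨S, hcard, hS, -⟩ := hk
  have : S ⊆ Finset.range σ.length := by
    intro i hi
    have := (hS i hi).1
    simp only [Finset.mem_range]
    omega
  calc k = S.card := hcard.symm
    _ ≤ (Finset.range σ.length).card := Finset.card_le_card this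
    _ = σ.length := Finset.card_range _

lemma nlap_mem (hℓ : 0 < ℓ) (σ : List ℕ) : nlap p σ ∈ nlapSet p σ :=
  Nat.sSup_mem ⟨0, zero_mem_nlapSet σ⟩ (nlapSet_bddAbove hℓ σ)

lemma le_nlap (hℓ : 0 < ℓ) {σ : List ℕ} {k : ℕ} (h : k ∈ nlapSet p σ) : k ≤ nlap p σ :=
  le_csSup (nlapSet_bddAbove hℓ σ) h

lemma nlap_eq_zero_of_avoids {σ : List ℕ} (h : AvoidsPat p σ) : nlap p σ = 0 := by
  have hub : ∀ k ∈ nlapSet p σ, k ≤ 0 := by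
    rintro k ⟨S, hcard, hS, -⟩
    have : S = ∅ := by
      by_contra hne
      obtain ⟨i, hi⟩ := Finset.nonempty_iff_ne_empty.2 hne
      exact h i (hS i hi)
    simp [this] at hcard
    omega
  have h0 : sSup (nlapSet p σ) ≤ 0 := csSup_le ⟨0, zero_mem_nlapSet σ⟩ hub
  rw [nlap_eq_sSup]
  omega

lemma one_le_nlap_of_occ (hℓ : 0 < ℓ) {σ : List ℕ} {i : ℕ} (h : OccAt p σ i) :
    1 ≤ nlap p σ := by
  apply le_nlap hℓ
  refine ⟨{i}, by simp, ?_, by simp⟩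
  intro j hj
  rw [Finset.mem_singleton] at hj
  subst hj
  exact h

lemma avoids_of_nlap_eq_zero (hℓ : 0 < ℓ) {σ : List ℕ} (h : nlap p σ = 0) :
    AvoidsPat p σ := by
  intro i hi
  have := one_le_nlap_of_occ hℓ hi
  omega

lemma exists_occ_of_nlap_ne_zero (hℓ : 0 < ℓ) {σ : List ℕ} (h : nlap p σ ≠ 0) :
    ∃ i, OccAt p σ i := by
  by_contra hno
  push_neg at hno
  exact h (nlap_eq_zero_of_avoids fun i hi => hno i hi)

/-- The key recursion: splitting at the first occurrence. -/
lemma nlap_split (hℓ : 0 < ℓ) {σ : List ℕ} {e : ℕ} (hocc : OccAt p σ e)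
    (hmin : ∀ i, OccAt p σ i → e ≤ i) :
    nlap p σ = nlap p (σ.drop (e + ℓ)) + 1 := by
  apply le_antisymm
  · obtain ⟨S, hcard, hS, hpair⟩ := nlap_mem (p := p) hℓ σ
    rw [← hcard]
    rcases S.eq_empty_or_nonempty with h | hSe
    · simp [h]
    have h1 : 1 ≤ S.card := Finset.card_pos.2 hSe
    set i₀ := S.min' hSe with hi₀
    have hi₀S : i₀ ∈ S := S.min'_mem hSe
    have key : ∀ j ∈ S.erase i₀, e + ℓ ≤ j := by
      intro j hj
      have hjS := Finset.mem_of_mem_erase hj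
      have hjne := Finset.ne_of_mem_erase hj
      have hij : i₀ ≤ j := S.min'_le j hjS
      have he : e ≤ i₀ := hmin i₀ (hS i₀ hi₀S)
      rcases hpair i₀ hi₀S j hjS (Ne.symm hjne) with h | h <;> omega
    have hmem : (S.erase i₀).card ∈ nlapSet p (σ.drop (e + ℓ)) := by
      refine ⟨(S.erase i₀).image (fun j => j - (e + ℓ)), ?_, ?_, ?_⟩
      · rw [Finset.card_image_of_injOn]
        intro a ha b hb hab
        dsimp only at hab
        have := key a ha; have := key b hb
        omega
      · intro i hi
        simp only [Finset.mem_image] at hi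
        obtain ⟨j, hj, rfl⟩ := hi
        rw [occAt_drop_iff hℓ, Nat.add_sub_cancel' (key j hj)]
        exact hS j (Finset.mem_of_mem_erase hj)
      · intro i hi j hj hij
        simp only [Finset.mem_image] at hi hj
        obtain ⟨a, ha, rfl⟩ := hi
        obtain ⟨b, hb, rfl⟩ := hj
        have hka := key a ha; have hkb := key b hb
        have hab : a ≠ b := by omega
        rcases hpair a (Finset.mem_of_mem_erase ha) b (Finset.mem_of_mem_erase hb) hab
          with h | h <;> omega
    have := le_nlap hℓ hmem
    rw [Finset.card_erase_of_mem hi₀S] at this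
    omega
  · obtain ⟨S', hcard, hS', hpair'⟩ := nlap_mem (p := p) hℓ (σ.drop (e + ℓ))
    apply le_nlap hℓ
    refine ⟨insert e (S'.image (fun j => j + (e + ℓ))), ?_, ?_, ?_⟩
    · rw [Finset.card_insert_of_notMem, Finset.card_image_of_injective _
        (add_left_injective _), hcard]
      intro h
      simp only [Finset.mem_image] at h
      obtain ⟨j, -, hj⟩ := h
      omega
    · intro i hi
      rcases Finset.mem_insert.1 hi with rfl | hi
      · exact hocc
      simp only [Finset.mem_image] at hi
      obtain ⟨j, hj, rfl⟩ := hi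
      have := hS' j hj
      rw [occAt_drop_iff hℓ] at this
      rwa [add_comm]
    · intro i hi j hj hij
      rcases Finset.mem_insert.1 hi with rfl | hi' <;>
        rcases Finset.mem_insert.1 hj with rfl | hj'
      · omega
      · simp only [Finset.mem_image] at hj'
        obtain ⟨b, hb, rfl⟩ := hj'
        omega
      · simp only [Finset.mem_image] at hi'
        obtain ⟨a, ha, rfl⟩ := hi'
        omega
      · simp only [Finset.mem_image] at hi' hj'
        obtain ⟨a, ha, rfl⟩ := hi'
        obtain ⟨b, hb, rfl⟩ := hj'
        have hab : a ≠ b := by omega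
        rcases hpair' a ha b hb hab with h | h <;> omega


/-- A "block": a word whose unique occurrence of the pattern sits at its very end. -/
def IsBlockP (p : Fin ℓ → α) (σ : List ℕ) : Prop :=
  ℓ ≤ σ.length ∧ OccAt p σ (σ.length - ℓ) ∧ AvoidsPat p σ.dropLast

/-- occurrences in a left factor of an append. -/
lemma occAt_append_left_iff {d w : List ℕ} {i : ℕ} :
    OccAt p d i ↔ i + ℓ ≤ d.length ∧ OccAt p (d ++ w) i := by
  rw [← occAt_take_iff, List.take_left]

lemma firstocc_block_append (hℓ : 0 < ℓ) {d : List ℕ} (hd : IsBlockP p d) (w : List ℕ) :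
    OccAt p (d ++ w) (d.length - ℓ) ∧ ∀ i, OccAt p (d ++ w) i → d.length - ℓ ≤ i := by
  obtain ⟨hlen, hocc, havoid⟩ := hd
  constructor
  · exact (occAt_append_left_iff.1 hocc).2
  · intro i hi
    by_contra hlt
    push_neg at hlt
    have h1 : i + ℓ ≤ d.length - 1 := by omega
    have : OccAt p ((d ++ w).take (d.length - 1)) i := occAt_take_iff.2 ⟨h1, hi⟩
    rw [List.take_append_of_le_length (by omega), ← List.dropLast_eq_take] at this
    exact havoid i this

lemma nlap_block_append (hℓ : 0 < ℓ) {d : List ℕ} (hd : IsBlockP p d) (w : List ℕ) :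
    nlap p (d ++ w) = nlap p w + 1 := by
  obtain ⟨hocc, hmin⟩ := firstocc_block_append hℓ hd w
  have := nlap_split hℓ hocc hmin
  rwa [Nat.sub_add_cancel hd.1, List.drop_left] at this

/-- The split point: start of the first occurrence. -/
noncomputable def firstOcc (p : Fin ℓ → α) (σ : List ℕ) : ℕ :=
  sInf {i | OccAt p σ i}

lemma firstOcc_spec {σ : List ℕ} (h : ∃ i, OccAt p σ i) :
    OccAt p σ (firstOcc p σ) ∧ ∀ i, OccAt p σ i → firstOcc p σ ≤ i :=
  ⟨Nat.sInf_mem h, fun _ hi => Nat.sInf_le hi⟩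

lemma block_take (hℓ : 0 < ℓ) {σ : List ℕ} (h : ∃ i, OccAt p σ i) :
    IsBlockP p (σ.take (firstOcc p σ + ℓ)) := by
  obtain ⟨hocc, hmin⟩ := firstOcc_spec h
  set e := firstOcc p σ with he
  have hlen : e + ℓ ≤ σ.length := hocc.1
  have hlt : (σ.take (e + ℓ)).length = e + ℓ := by
    rw [List.length_take]; omega
  refine ⟨by omega, ?_, ?_⟩
  · rw [hlt]
    have : e + ℓ - ℓ = e := by omega
    rw [this]
    exact occAt_take_iff.2 ⟨le_rfl, hocc⟩
  · rw [List.dropLast_eq_take, hlt, List.take_take]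
    intro i hi
    rw [occAt_take_iff] at hi
    obtain ⟨hi1, hi2⟩ := hi
    have := hmin i hi2
    omega

lemma nlap_take_drop (hℓ : 0 < ℓ) {σ : List ℕ} (h : ∃ i, OccAt p σ i) :
    nlap p σ = nlap p (σ.drop (firstOcc p σ + ℓ)) + 1 := by
  obtain ⟨hocc, hmin⟩ := firstOcc_spec h
  exact nlap_split hℓ hocc hmin

lemma firstOcc_block_append (hℓ : 0 < ℓ) {d : List ℕ} (hd : IsBlockP p d) (w : List ℕ) :
    firstOcc p (d ++ w) = d.length - ℓ := by
  obtain ⟨hocc, hmin⟩ := firstocc_block_append hℓ hd w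
  exact le_antisymm (Nat.sInf_le hocc) (hmin _ (firstOcc_spec ⟨_, hocc⟩).1)

lemma split_block_append (hℓ : 0 < ℓ) {d : List ℕ} (hd : IsBlockP p d) (w : List ℕ) :
    (d ++ w).take (firstOcc p (d ++ w) + ℓ) = d ∧
      (d ++ w).drop (firstOcc p (d ++ w) + ℓ) = w := by
  rw [firstOcc_block_append hℓ hd w, Nat.sub_add_cancel hd.1]
  exact ⟨List.take_left, List.drop_left⟩

/-- The finset of compositions of `n` with `m` parts from `A`. -/
def comps (A : Finset ℕ) : ℕ → ℕ → Finset (List ℕ)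
  | n, 0 => if n = 0 then {([] : List ℕ)} else ∅
  | n, (m + 1) => (A.filter (· ≤ n)).biUnion fun a => ((comps A (n - a) m).image (a :: ·))

lemma mem_comps {A : Finset ℕ} {n m : ℕ} {σ : List ℕ} :
    σ ∈ comps A n m ↔ IsCompOf A n m σ := by
  induction m generalizing n σ with
  | zero =>
    by_cases hn : n = 0 <;>
      simp only [comps, hn, if_true, if_false, Finset.mem_singleton, Finset.notMem_empty,
        IsCompOf, List.length_eq_zero_iff]
    · constructor
      · rintro rfl; simp
      · rintro ⟨-, -, rfl⟩; rfl
    · constructor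
      · rintro ⟨⟩
      · rintro ⟨-, hs, rfl⟩
        simp at hs
        exact hn hs.symm
  | succ m ih =>
    simp only [comps, Finset.mem_biUnion, Finset.mem_image, Finset.mem_filter]
    constructor
    · rintro ⟨a, ⟨haA, han⟩, w, hw, rfl⟩
      obtain ⟨hwA, hws, hwl⟩ := ih.1 hw
      refine ⟨?_, ?_, ?_⟩
      · intro x hx
        rcases List.mem_cons.1 hx with rfl | hx
        · exact haA
        · exact hwA x hx
      · simp [hws]; omega
      · simp [hwl]
    · rintro ⟨hA, hs, hl⟩
      rcases σ with _ | ⟨a, w⟩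
      · simp at hl
      refine ⟨a, ⟨hA a (by simp), ?_⟩, w, ih.2 ⟨fun x hx => hA x (by simp [hx]), ?_, ?_⟩, rfl⟩
      · simp at hs; omega
      · simp at hs; omega
      · simpa using hl


open Classical in
/-- Number of compositions of `n` with `m` parts in `A` satisfying `P`. -/
noncomputable def cntF (A : Finset ℕ) (P : List ℕ → Prop) (n m : ℕ) : ℕ :=
  ((comps A n m).filter P).card

lemma ncard_eq_cntF (A : Finset ℕ) (P : List ℕ → Prop) (n m : ℕ) :
    {σ : List ℕ | IsCompOf A n m σ ∧ P σ}.ncard = cntF A P n m := by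
  classical
  have h : {σ : List ℕ | IsCompOf A n m σ ∧ P σ} = ↑((comps A n m).filter P) := by
    ext σ
    simp [mem_comps]
  rw [h, Set.ncard_coe_finset, cntF]

lemma cntF_card (A : Finset ℕ) (P : List ℕ → Prop) [DecidablePred P] (n m : ℕ) :
    cntF A P n m = ((comps A n m).filter P).card := by
  unfold cntF
  congr!

lemma cntF_congr {A : Finset ℕ} {P Q : List ℕ → Prop} {n m : ℕ}
    (h : ∀ σ ∈ comps A n m, (P σ ↔ Q σ)) : cntF A P n m = cntF A Q n m := by
  classical
  unfold cntF
  congr 1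
  exact Finset.filter_congr (by simpa using h)

/-- The generating series of a counting function. -/
noncomputable def serF (f : ℕ → ℕ → ℕ) : MvPowerSeries (Fin 2) ℚ :=
  fun d => (f (d 0) (d 1) : ℚ)

lemma coeff_serF (f : ℕ → ℕ → ℕ) (d : Fin 2 →₀ ℕ) :
    MvPowerSeries.coeff (R := ℚ) d (serF f) = (f (d 0) (d 1) : ℚ) :=
  MvPowerSeries.coeff_apply (serF f) d

lemma fin2_decomp (d : Fin 2 →₀ ℕ) :
    Finsupp.single 0 (d 0) + Finsupp.single 1 (d 1) = d := by
  ext i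
  fin_cases i <;> simp [Finsupp.single_apply]

lemma fin2_eval0 (n m : ℕ) :
    ((Finsupp.single (0 : Fin 2) n + Finsupp.single 1 m : Fin 2 →₀ ℕ) : Fin 2 → ℕ) 0 = n := by
  simp [Finsupp.single_apply]

lemma fin2_eval1 (n m : ℕ) :
    ((Finsupp.single (0 : Fin 2) n + Finsupp.single 1 m : Fin 2 →₀ ℕ) : Fin 2 → ℕ) 1 = m := by
  simp [Finsupp.single_apply]

lemma coeff_serF_mul (f g : ℕ → ℕ → ℕ) (d : Fin 2 →₀ ℕ) :
    MvPowerSeries.coeff (R := ℚ) d (serF f * serF g) =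
      ∑ q1 ∈ Finset.HasAntidiagonal.antidiagonal (d 0), ∑ q2 ∈ Finset.HasAntidiagonal.antidiagonal (d 1),
        (f q1.1 q2.1 * g q1.2 q2.2 : ℚ) := by
  classical
  have key : ∑ q ∈ Finset.HasAntidiagonal.antidiagonal d,
      MvPowerSeries.coeff (R := ℚ) q.1 (serF f) * MvPowerSeries.coeff (R := ℚ) q.2 (serF g) =
      ∑ q ∈ Finset.HasAntidiagonal.antidiagonal (d 0) ×ˢ Finset.HasAntidiagonal.antidiagonal (d 1),
        (f q.1.1 q.2.1 * g q.1.2 q.2.2 : ℚ) := by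
    refine Finset.sum_nbij' (i := fun x => ((x.1 0, x.2 0), (x.1 1, x.2 1)))
      (j := fun q => (Finsupp.single 0 q.1.1 + Finsupp.single 1 q.2.1,
        Finsupp.single 0 q.1.2 + Finsupp.single 1 q.2.2)) ?_ ?_ ?_ ?_ ?_
    · rintro ⟨x1, x2⟩ hx
      rw [Finset.HasAntidiagonal.mem_antidiagonal] at hx
      simp only [Finset.mem_product, Finset.HasAntidiagonal.mem_antidiagonal]
      constructor
      · show x1 0 + x2 0 = d 0
        rw [← hx]; simp
      · show x1 1 + x2 1 = d 1
        rw [← hx]; simp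
    · rintro ⟨⟨n1, n2⟩, ⟨m1, m2⟩⟩ hq
      simp only [Finset.mem_product, Finset.HasAntidiagonal.mem_antidiagonal] at hq
      rw [Finset.HasAntidiagonal.mem_antidiagonal]
      have h2 : (Finsupp.single (0:Fin 2) n1 + Finsupp.single 1 m1) +
          (Finsupp.single (0:Fin 2) n2 + Finsupp.single 1 m2) =
          Finsupp.single (0:Fin 2) (n1 + n2) + Finsupp.single 1 (m1 + m2) := by
        rw [Finsupp.single_add, Finsupp.single_add]
        abel
      rw [h2, hq.1, hq.2, fin2_decomp]
    · rintro ⟨x1, x2⟩ _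
      simp only [Prod.mk.injEq]
      exact ⟨fin2_decomp x1, fin2_decomp x2⟩
    · rintro ⟨⟨n1, n2⟩, ⟨m1, m2⟩⟩ _
      simp only [Prod.mk.injEq]
      refine ⟨⟨?_, ?_⟩, ?_, ?_⟩
      · exact fin2_eval0 n1 m1
      · exact fin2_eval0 n2 m2
      · exact fin2_eval1 n1 m1
      · exact fin2_eval1 n2 m2
    · rintro ⟨x1, x2⟩ _
      rw [coeff_serF, coeff_serF]
  rw [MvPowerSeries.coeff_mul, key, Finset.sum_product]


lemma exists_concat {σ : List ℕ} (h : σ ≠ []) : ∃ w a, σ = w ++ [a] := by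
  rcases List.eq_nil_or_concat σ with h' | ⟨w, a, h'⟩
  · exact absurd h' h
  · exact ⟨w, a, by simpa [List.concat_eq_append] using h'⟩

lemma empty_mem_comps_iff {A : Finset ℕ} {n m : ℕ} :
    ([] : List ℕ) ∈ comps A n m ↔ n = 0 ∧ m = 0 := by
  rw [mem_comps]
  constructor
  · rintro ⟨-, hs, hl⟩
    simp at hs hl
    exact ⟨hs.symm, hl.symm⟩
  · rintro ⟨rfl, rfl⟩
    exact ⟨by simp, rfl, rfl⟩

/-- Counting identity (i): blocks-with-last-letter-removed. -/
lemma cntT_eq (A : Finset ℕ) (n m : ℕ) :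
    cntF A (fun σ => σ ≠ [] ∧ AvoidsPat p σ.dropLast) n m =
      ∑ a ∈ A, if a ≤ n ∧ 1 ≤ m then cntF A (AvoidsPat p) (n - a) (m - 1) else 0 := by
  classical
  simp only [cntF_card]
  rw [Finset.card_eq_sum_card_fiberwise (f := fun σ => σ.getLastD 0) (t := A) ?hmem]
  case hmem =>
    intro σ hσ
    rw [Finset.mem_coe, Finset.mem_filter] at hσ
    obtain ⟨hσc, hne, -⟩ := hσ
    obtain ⟨w, a, rfl⟩ := exists_concat hne
    dsimp only
    rw [List.getLastD_concat]
    exact (mem_comps.1 hσc).1 a (by simp)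
  refine Finset.sum_congr rfl fun a ha => ?_
  by_cases hcond : a ≤ n ∧ 1 ≤ m
  · rw [if_pos hcond]
    apply Finset.card_bij' (i := fun σ _ => σ.dropLast) (j := fun w _ => w ++ [a])
    · -- hi
      intro σ hσ
      rw [Finset.mem_filter] at hσ
      obtain ⟨hσ, hlast⟩ := hσ
      rw [Finset.mem_filter] at hσ
      obtain ⟨hσc, hne, hav⟩ := hσ
      obtain ⟨w, b, rfl⟩ := exists_concat hne
      simp only [List.getLastD_concat] at hlast
      subst hlast
      obtain ⟨hP, hsum, hlen⟩ := mem_comps.1 hσc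
      rw [Finset.mem_filter, mem_comps]
      rw [List.dropLast_concat] at hav ⊢
      refine ⟨⟨fun x hx => hP x (by simp [hx]), ?_, ?_⟩, hav⟩
      · rw [List.sum_append] at hsum
        simp at hsum
        omega
      · rw [List.length_append] at hlen
        simp at hlen
        omega
    · -- hj
      intro w hw
      rw [Finset.mem_filter, mem_comps] at hw
      obtain ⟨⟨hP, hsum, hlen⟩, hav⟩ := hw
      rw [Finset.mem_filter, Finset.mem_filter, mem_comps]
      refine ⟨⟨⟨fun x hx => ?_, ?_, ?_⟩, by simp, ?_⟩, ?_⟩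
      · rcases List.mem_append.1 hx with hx | hx
        · exact hP x hx
        · simp at hx
          subst hx
          exact ha
      · rw [List.sum_append]
        simp [hsum]
        omega
      · rw [List.length_append]
        simp [hlen]
        omega
      · rw [List.dropLast_concat]
        exact hav
      · simp [List.getLastD_concat]
    · -- left inverse
      intro σ hσ
      rw [Finset.mem_filter] at hσ
      obtain ⟨hσ, hlast⟩ := hσ
      rw [Finset.mem_filter] at hσ
      obtain ⟨-, hne, -⟩ := hσ
      obtain ⟨w, b, rfl⟩ := exists_concat hne
      simp only [List.getLastD_concat] at hlast
      subst hlast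
      rw [List.dropLast_concat]
    · -- right inverse
      intro w _
      rw [List.dropLast_concat]
  · rw [if_neg hcond]
    rw [Finset.card_eq_zero]
    apply Finset.eq_empty_of_forall_notMem
    intro σ hσ
    rw [Finset.mem_filter] at hσ
    obtain ⟨hσ, hlast⟩ := hσ
    rw [Finset.mem_filter] at hσ
    obtain ⟨hσc, hne, -⟩ := hσ
    obtain ⟨w, b, rfl⟩ := exists_concat hne
    simp only [List.getLastD_concat] at hlast
    subst hlast
    obtain ⟨hP, hsum, hlen⟩ := mem_comps.1 hσc
    apply hcond
    constructor
    · rw [← hsum, List.sum_append]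
      simp
    · rw [← hlen, List.length_append]
      simp

/-- Counting identity (ii): blocks vs nonempty dropLast-avoiders. -/
lemma cntB_split (hℓ : 0 < ℓ) (A : Finset ℕ) (n m : ℕ) :
    cntF A (IsBlockP p) n m + cntF A (fun σ => σ ≠ [] ∧ AvoidsPat p σ) n m =
      cntF A (fun σ => σ ≠ [] ∧ AvoidsPat p σ.dropLast) n m := by
  classical
  have hB : cntF A (IsBlockP p) n m =
      cntF A (fun σ => (σ ≠ [] ∧ AvoidsPat p σ.dropLast) ∧ ¬ AvoidsPat p σ) n m := by
    apply cntF_congr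
    intro σ _
    constructor
    · rintro ⟨hlen, hocc, hav⟩
      refine ⟨⟨?_, hav⟩, fun h => h _ hocc⟩
      intro h
      subst h
      simp at hlen
      omega
    · rintro ⟨⟨hne, hav⟩, hnav⟩
      rw [AvoidsPat] at hnav
      push_neg at hnav
      obtain ⟨i, hocc⟩ := hnav
      have hil := hocc.1
      have hlen : 1 ≤ σ.length := by
        rcases σ with _ | _
        · exact absurd rfl hne
        · simp
      have hi : i = σ.length - ℓ := by
        by_contra hne'
        have h1 : i + ℓ ≤ σ.length - 1 := by omega
        have : OccAt p (σ.take (σ.length - 1)) i := occAt_take_iff.2 ⟨h1, hocc⟩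
        rw [← List.dropLast_eq_take] at this
        exact hav i this
      subst hi
      exact ⟨by omega, hocc, hav⟩
  have hCne : cntF A (fun σ => σ ≠ [] ∧ AvoidsPat p σ) n m =
      cntF A (fun σ => (σ ≠ [] ∧ AvoidsPat p σ.dropLast) ∧ AvoidsPat p σ) n m := by
    apply cntF_congr
    intro σ _
    constructor
    · rintro ⟨hne, hav⟩
      exact ⟨⟨hne, avoids_dropLast hav⟩, hav⟩
    · rintro ⟨⟨hne, -⟩, hav⟩
      exact ⟨hne, hav⟩
  rw [hB, hCne]
  simp only [cntF_card]
  have hsplit : (comps A n m).filter (fun σ => σ ≠ [] ∧ AvoidsPat p σ.dropLast) =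
      ((comps A n m).filter (fun σ => (σ ≠ [] ∧ AvoidsPat p σ.dropLast) ∧ ¬ AvoidsPat p σ)) ∪
      ((comps A n m).filter (fun σ => (σ ≠ [] ∧ AvoidsPat p σ.dropLast) ∧ AvoidsPat p σ)) := by
    ext σ
    simp only [Finset.mem_union, Finset.mem_filter]
    tauto
  rw [hsplit, Finset.card_union_of_disjoint]
  rw [Finset.disjoint_filter]
  tauto

/-- Counting identity (iii): avoiders vs nonempty avoiders. -/
lemma cntC_split (hℓ : 0 < ℓ) (A : Finset ℕ) (n m : ℕ) :
    cntF A (AvoidsPat p) n m =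
      cntF A (fun σ => σ ≠ [] ∧ AvoidsPat p σ) n m + (if n = 0 ∧ m = 0 then 1 else 0) := by
  classical
  simp only [cntF_card]
  have hsplit : (comps A n m).filter (AvoidsPat p) =
      ((comps A n m).filter (fun σ => σ ≠ [] ∧ AvoidsPat p σ)) ∪
      ((comps A n m).filter (fun σ => σ = [] ∧ AvoidsPat p σ)) := by
    ext σ
    simp only [Finset.mem_union, Finset.mem_filter]
    tauto
  rw [hsplit, Finset.card_union_of_disjoint]
  · congr 1
    by_cases h : n = 0 ∧ m = 0
    · rw [if_pos h]
      obtain ⟨rfl, rfl⟩ := h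
      have he : (comps A 0 0).filter (fun σ => σ = [] ∧ AvoidsPat p σ) = {([] : List ℕ)} := by
        apply Finset.eq_singleton_iff_unique_mem.2
        constructor
        · rw [Finset.mem_filter]
          exact ⟨empty_mem_comps_iff.2 ⟨rfl, rfl⟩, rfl, avoids_nil hℓ⟩
        · intro σ hσ
          rw [Finset.mem_filter] at hσ
          exact hσ.2.1
      rw [he]
      rfl
    · rw [if_neg h]
      rw [Finset.card_eq_zero]
      apply Finset.eq_empty_of_forall_notMem
      intro σ hσ
      rw [Finset.mem_filter] at hσ
      obtain ⟨hσc, rfl, -⟩ := hσ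
      exact h (empty_mem_comps_iff.1 hσc)
  · rw [Finset.disjoint_filter]
    tauto


/-- The main recurrence: peeling off the first block. -/
lemma cnt_rec (hℓ : 0 < ℓ) (A : Finset ℕ) (k n m : ℕ) :
    cntF A (fun σ => nlap p σ = k + 1) n m =
      ∑ q1 ∈ Finset.HasAntidiagonal.antidiagonal n, ∑ q2 ∈ Finset.HasAntidiagonal.antidiagonal m,
        cntF A (IsBlockP p) q1.1 q2.1 * cntF A (fun σ => nlap p σ = k) q1.2 q2.2 := by
  classical
  simp only [cntF_card]
  rw [Finset.card_eq_sum_card_fiberwise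
    (f := fun σ => (((σ.take (firstOcc p σ + ℓ)).sum, (σ.drop (firstOcc p σ + ℓ)).sum),
      ((σ.take (firstOcc p σ + ℓ)).length, (σ.drop (firstOcc p σ + ℓ)).length)))
    (t := Finset.HasAntidiagonal.antidiagonal n ×ˢ Finset.HasAntidiagonal.antidiagonal m) ?hmem]
  case hmem =>
    intro σ hσ
    rw [Finset.mem_coe, Finset.mem_filter] at hσ
    obtain ⟨hσc, -⟩ := hσ
    obtain ⟨-, hsum, hlen⟩ := mem_comps.1 hσc
    simp only [Finset.mem_coe, Finset.mem_product, Finset.HasAntidiagonal.mem_antidiagonal]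
    constructor
    · rw [← hsum]
      conv_rhs => rw [← List.take_append_drop (firstOcc p σ + ℓ) σ]
      rw [List.sum_append]
    · rw [← hlen]
      conv_rhs => rw [← List.take_append_drop (firstOcc p σ + ℓ) σ]
      rw [List.length_append]
  rw [Finset.sum_product]
  refine Finset.sum_congr rfl fun q1 hq1 => Finset.sum_congr rfl fun q2 hq2 => ?_
  rw [Finset.HasAntidiagonal.mem_antidiagonal] at hq1 hq2
  rw [← Finset.card_product]
  refine Finset.card_bij'
    (fun σ _ => (σ.take (firstOcc p σ + ℓ), σ.drop (firstOcc p σ + ℓ)))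
    (fun x _ => x.1 ++ x.2) ?hi ?hj ?hleft ?hright
  case hi =>
    intro σ hσ
    rw [Finset.mem_filter] at hσ
    obtain ⟨hσ, hfib⟩ := hσ
    rw [Finset.mem_filter] at hσ
    obtain ⟨hσc, hnl⟩ := hσ
    obtain ⟨hP, -, -⟩ := mem_comps.1 hσc
    have hocc : ∃ i, OccAt p σ i := exists_occ_of_nlap_ne_zero hℓ (by omega)
    have hs1 : (σ.take (firstOcc p σ + ℓ)).sum = q1.1 := congrArg (fun z => z.1.1) hfib
    have hs2 : (σ.drop (firstOcc p σ + ℓ)).sum = q1.2 := congrArg (fun z => z.1.2) hfib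
    have hl1 : (σ.take (firstOcc p σ + ℓ)).length = q2.1 := congrArg (fun z => z.2.1) hfib
    have hl2 : (σ.drop (firstOcc p σ + ℓ)).length = q2.2 := congrArg (fun z => z.2.2) hfib
    simp only [Finset.mem_product, Finset.mem_filter]
    refine ⟨⟨mem_comps.2 ⟨fun x hx => hP x (List.take_subset _ _ hx), hs1, hl1⟩,
      block_take hℓ hocc⟩,
      mem_comps.2 ⟨fun x hx => hP x (List.drop_subset _ _ hx), hs2, hl2⟩, ?_⟩
    have := nlap_take_drop hℓ hocc
    omega
  case hj =>
    rintro ⟨d, w⟩ hx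
    simp only [Finset.mem_product, Finset.mem_filter] at hx
    obtain ⟨⟨hdc, hdb⟩, hwc, hwn⟩ := hx
    obtain ⟨hdP, hdsum, hdlen⟩ := mem_comps.1 hdc
    obtain ⟨hwP, hwsum, hwlen⟩ := mem_comps.1 hwc
    obtain ⟨htake, hdrop⟩ := split_block_append hℓ hdb w
    rw [Finset.mem_filter, Finset.mem_filter]
    refine ⟨⟨mem_comps.2 ⟨?_, ?_, ?_⟩, ?_⟩, ?_⟩
    · intro x hx
      rcases List.mem_append.1 hx with hx | hx
      · exact hdP x hx
      · exact hwP x hx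
    · rw [List.sum_append, hdsum, hwsum, hq1]
    · rw [List.length_append, hdlen, hwlen, hq2]
    · rw [nlap_block_append hℓ hdb w, hwn]
    · exact Prod.ext_iff.2 ⟨Prod.ext_iff.2 ⟨by rw [htake, hdsum], by rw [hdrop, hwsum]⟩,
        Prod.ext_iff.2 ⟨by rw [htake, hdlen], by rw [hdrop, hwlen]⟩⟩
  case hleft =>
    intro σ _
    exact List.take_append_drop _ σ
  case hright =>
    rintro ⟨d, w⟩ hx
    simp only [Finset.mem_product, Finset.mem_filter] at hx
    obtain ⟨⟨-, hdb⟩, -, -⟩ := hx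
    obtain ⟨htake, hdrop⟩ := split_block_append hℓ hdb w
    exact Prod.ext_iff.2 ⟨htake, hdrop⟩


lemma ser_rec (hℓ : 0 < ℓ) (A : Finset ℕ) (k : ℕ) :
    serF (cntF A (fun σ => nlap p σ = k + 1)) =
      serF (cntF A (IsBlockP p)) * serF (cntF A (fun σ => nlap p σ = k)) := by
  apply MvPowerSeries.ext
  intro d
  rw [coeff_serF, coeff_serF_mul, cnt_rec hℓ A k (d 0) (d 1)]
  push_cast
  rfl

lemma ser_pow (hℓ : 0 < ℓ) (A : Finset ℕ) (s : ℕ) :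
    serF (cntF A (fun σ => nlap p σ = s)) =
      serF (cntF A (AvoidsPat p)) * (serF (cntF A (IsBlockP p))) ^ s := by
  induction s with
  | zero =>
    rw [pow_zero, mul_one]
    have h : cntF A (fun σ => nlap p σ = 0) = cntF A (AvoidsPat p) := by
      funext n m
      exact cntF_congr fun σ _ => ⟨avoids_of_nlap_eq_zero hℓ, nlap_eq_zero_of_avoids⟩
    rw [h]
  | succ k ih =>
    rw [ser_rec hℓ A k, ih]
    ring

lemma block_series (hℓ : 0 < ℓ) (A : Finset ℕ) :
    ((MvPowerSeries.X 1 : MvPowerSeries (Fin 2) ℚ) * (∑ a ∈ A, (MvPowerSeries.X 0) ^ a) - 1) *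
        serF (cntF A (AvoidsPat p)) + 1 = serF (cntF A (IsBlockP p)) := by
  classical
  have hXa : ∀ a : ℕ, (MvPowerSeries.X (1 : Fin 2) : MvPowerSeries (Fin 2) ℚ) *
      (MvPowerSeries.X 0) ^ a =
      MvPowerSeries.monomial (R := ℚ) (Finsupp.single 1 1 + Finsupp.single 0 a) 1 := by
    intro a
    rw [MvPowerSeries.X_pow_eq, MvPowerSeries.X_def, MvPowerSeries.monomial_mul_monomial, one_mul]
  apply MvPowerSeries.ext
  intro d
  have hexp : ((MvPowerSeries.X 1 : MvPowerSeries (Fin 2) ℚ) *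
      (∑ a ∈ A, (MvPowerSeries.X 0) ^ a) - 1) * serF (cntF A (AvoidsPat p)) + 1 =
      (∑ a ∈ A, MvPowerSeries.monomial (R := ℚ) (Finsupp.single 1 1 + Finsupp.single 0 a) 1 *
        serF (cntF A (AvoidsPat p))) - serF (cntF A (AvoidsPat p)) + 1 := by
    have h1 : (MvPowerSeries.X 1 : MvPowerSeries (Fin 2) ℚ) * (∑ a ∈ A, (MvPowerSeries.X 0) ^ a)
        = ∑ a ∈ A, MvPowerSeries.monomial (R := ℚ) (Finsupp.single 1 1 + Finsupp.single 0 a) 1 := by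
      rw [Finset.mul_sum]
      exact Finset.sum_congr rfl fun a _ => hXa a
    rw [h1, sub_mul, one_mul, Finset.sum_mul]
  rw [hexp, map_add, map_sub, map_sum]
  simp only [MvPowerSeries.coeff_monomial_mul, one_mul, coeff_serF, MvPowerSeries.coeff_one]
  have hle : ∀ a : ℕ, ((Finsupp.single (1 : Fin 2) 1 + Finsupp.single 0 a) ≤ d)
      ↔ (a ≤ d 0 ∧ 1 ≤ d 1) := by
    intro a
    rw [Finsupp.le_def, Fin.forall_fin_two]
    simp [Finsupp.single_apply]
  have hsub0 : ∀ a : ℕ,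
      ((d - (Finsupp.single (1 : Fin 2) 1 + Finsupp.single 0 a) : Fin 2 →₀ ℕ) : Fin 2 → ℕ) 0
        = d 0 - a := by
    intro a
    rw [Finsupp.tsub_apply]
    simp [Finsupp.single_apply]
  have hsub1 : ∀ a : ℕ,
      ((d - (Finsupp.single (1 : Fin 2) 1 + Finsupp.single 0 a) : Fin 2 →₀ ℕ) : Fin 2 → ℕ) 1
        = d 1 - 1 := by
    intro a
    rw [Finsupp.tsub_apply]
    simp [Finsupp.single_apply]
  have hzero : (d = 0) ↔ (d 0 = 0 ∧ d 1 = 0) := by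
    constructor
    · rintro rfl
      simp
    · rintro ⟨h0, h1⟩
      rw [← fin2_decomp d, h0, h1]
      simp
  simp only [hle, hsub0, hsub1, hzero]
  have e1 := cntT_eq (p := p) A (d 0) (d 1)
  have e2 := cntB_split (p := p) hℓ A (d 0) (d 1)
  have e3 := cntC_split (p := p) hℓ A (d 0) (d 1)
  have e1q := congrArg (Nat.cast : ℕ → ℚ) e1
  have e2q := congrArg (Nat.cast : ℕ → ℚ) e2
  have e3q := congrArg (Nat.cast : ℕ → ℚ) e3
  push_cast at e1q e2q e3q
  rw [← e1q]
  linarith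

end Stmt16Aux

open MvPowerSeries in
theorem stmt16 {α : Type*} [PartialOrder α] {ℓ : ℕ} (hℓ : 0 < ℓ) (p : Fin ℓ → α)
    (A : Finset ℕ) (hA : A.Nonempty) (hpos : ∀ a ∈ A, 0 < a) (s : ℕ)
    (H C : MvPowerSeries (Fin 2) ℚ)
    (hH : ∀ n m : ℕ,
      (MvPowerSeries.coeff (R := ℚ) (Finsupp.single 0 n + Finsupp.single 1 m)) H
        = (Set.ncard {σ : List ℕ | IsCompOf A n m σ ∧ nlap p σ = s} : ℚ))
    (hC : ∀ n m : ℕ,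
      (MvPowerSeries.coeff (R := ℚ) (Finsupp.single 0 n + Finsupp.single 1 m)) C
        = (Set.ncard {σ : List ℕ | IsCompOf A n m σ ∧ AvoidsPat p σ} : ℚ)) :
    H = C * (((X 1 : MvPowerSeries (Fin 2) ℚ) * (∑ a ∈ A, (X 0) ^ a) - 1) * C + 1) ^ s := by
  classical
  have hHs : H = Stmt16Aux.serF (Stmt16Aux.cntF A (fun σ => nlap p σ = s)) := by
    apply MvPowerSeries.ext
    intro d
    rw [Stmt16Aux.coeff_serF, ← Stmt16Aux.ncard_eq_cntF]
    have h := hH (d 0) (d 1)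
    rwa [Stmt16Aux.fin2_decomp d] at h
  have hCs : C = Stmt16Aux.serF (Stmt16Aux.cntF A (AvoidsPat p)) := by
    apply MvPowerSeries.ext
    intro d
    rw [Stmt16Aux.coeff_serF, ← Stmt16Aux.ncard_eq_cntF]
    have h := hC (d 0) (d 1)
    rwa [Stmt16Aux.fin2_decomp d] at h
  rw [hHs, hCs, Stmt16Aux.ser_pow hℓ A s, Stmt16Aux.block_series hℓ A]
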